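/- Let H be a real Hilbert space, V_h ⊆ H a closed subspace, a : H × H → ℝ bilinear with a(v,v) ≥ ‖v‖² for all v, and D : H → H monotone and Lipschitz with constant L on the relevant set. Let y ∈ H and y_h, ỹ_h ∈ V_h satisfy: a(y, v) + ⟨D(y), v⟩ = ℓ(v) and a(y_h, v) + ⟨D(y_h), v⟩ = ℓ(v) for all v ∈ V_h, and a(y - ỹ_h, v) = 0 for all v ∈ V_h (Ritz projection). Then ‖ỹ_h - y_h‖ ≤ L · ‖y - ỹ_h‖. -/
import Mathlib


open InnerProductSpace

/-- Abstract supercloseness lemma: the finite element solution of the semilinear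
problem is superclose to the Ritz projection of the continuous solution. -/
theorem supercloseness {H : Type*} [NormedAddCommGroup H] [InnerProductSpace ℝ H]
    [CompleteSpace H]
    (Vh : Submodule ℝ H) (hVh : IsClosed (Vh : Set H))
    (a : H →ₗ[ℝ] H →ₗ[ℝ] ℝ)
    (hcoer : ∀ v : H, ‖v‖ ^ 2 ≤ a v v)
    (D : H → H) (L : ℝ)
    (hmono : ∀ u v : H, 0 ≤ ⟪D u - D v, u - v⟫_ℝ)
    (hlip : ∀ u v : H, ‖D u - D v‖ ≤ L * ‖u - v‖)
    (lin : H → ℝ)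
    (y yh yt : H) (hyh : yh ∈ Vh) (hyt : yt ∈ Vh)
    (hy : ∀ v ∈ Vh, a y v + ⟪D y, v⟫_ℝ = lin v)
    (hyh_eq : ∀ v ∈ Vh, a yh v + ⟪D yh, v⟫_ℝ = lin v)
    (hRitz : ∀ v ∈ Vh, a (y - yt) v = 0) :
    ‖yt - yh‖ ≤ L * ‖y - yt‖ := by
  set e := yt - yh with he
  have heVh : e ∈ Vh := Vh.sub_mem hyt hyh
  clear_value e
  have h1 : a (yt - y) e = 0 := by
    have hrw : yt - y = -(y - yt) := by abel
    rw [hrw, map_neg, LinearMap.neg_apply, hRitz e heVh, neg_zero]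
  have h2 : a (y - yh) e = ⟪D yh - D y, e⟫_ℝ := by
    have hy' := hy e heVh
    have hyh' := hyh_eq e heVh
    rw [map_sub, LinearMap.sub_apply, inner_sub_left]
    linarith
  have key : a e e = ⟪D yh - D y, e⟫_ℝ := by
    have : a e e = a (yt - y) e + a (y - yh) e := by
      rw [← LinearMap.add_apply, ← map_add]
      congr 2; rw [he]; abel
    rw [this, h1, h2, zero_add]
  have hsplit : ⟪D yh - D y, e⟫_ℝ = ⟪D yh - D yt, e⟫_ℝ + ⟪D yt - D y, e⟫_ℝ := by
    rw [← inner_add_left]; congr 1; abel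
  have hm : ⟪D yh - D yt, e⟫_ℝ ≤ 0 := by
    have := hmono yh yt
    have hye : yh - yt = -e := by rw [he]; abel
    rw [hye, inner_neg_right] at this
    linarith
  have hcs : ⟪D yt - D y, e⟫_ℝ ≤ L * ‖y - yt‖ * ‖e‖ := by
    calc ⟪D yt - D y, e⟫_ℝ ≤ ‖D yt - D y‖ * ‖e‖ := real_inner_le_norm _ _
      _ ≤ (L * ‖yt - y‖) * ‖e‖ := by
          apply mul_le_mul_of_nonneg_right (hlip yt y) (norm_nonneg _)
      _ = L * ‖y - yt‖ * ‖e‖ := by rw [norm_sub_rev]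
  have hsq : ‖e‖ ^ 2 ≤ L * ‖y - yt‖ * ‖e‖ := by
    calc ‖e‖ ^ 2 ≤ a e e := hcoer e
      _ = _ := key
      _ ≤ L * ‖y - yt‖ * ‖e‖ := by rw [hsplit]; linarith
  have hLpos : 0 ≤ L * ‖y - yt‖ := by
    calc (0:ℝ) ≤ ‖D yt - D y‖ := norm_nonneg _
      _ ≤ L * ‖yt - y‖ := hlip yt y
      _ = L * ‖y - yt‖ := by rw [norm_sub_rev]
  rcases eq_or_lt_of_le (norm_nonneg e) with h0 | h0
  · rw [← h0]; exact hLpos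
  · have h := le_of_mul_le_mul_right (by nlinarith : ‖e‖ * ‖e‖ ≤ (L * ‖y - yt‖) * ‖e‖) h0
    exact h
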